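/- Let G be a finite simple graph with 10 vertices, 21 edges, and minimum degree at least 3, and suppose that for every pair of distinct vertices a, b the induced subgraph G−a,b has at least 12 edges. Then the multiset of vertex degrees of G is one of (5^6,3^4), (5^5,4^2,3^3), (5^4,4^4,3^2), (5^3,4^6,3), or (5^2,4^8). -/

import Mathlib

open scoped Classical

open Finset

private lemma stmt15_pair {V : Type*} [Fintype V] (G : SimpleGraph V)
    (hE : G.edgeFinset.card = 21)
    (hdel : ∀ a b : V, a ≠ b →
      12 ≤ (G.induce ({a, b}ᶜ : Set V)).edgeFinset.card)
    (a b : V) (hab : a ≠ b) :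
    G.degree a + G.degree b ≤ 9 + (if G.Adj a b then 1 else 0) := by
  classical
  set S := G.edgeFinset.filter (fun e => ¬ (a ∈ e ∨ b ∈ e)) with hS
  have h1 : (G.induce ({a, b}ᶜ : Set V)).edgeFinset.card ≤ S.card := by
    apply Finset.card_le_card_of_injOn (fun e => e.map (Subtype.val : ({a,b}ᶜ : Set V) → V))
    · intro e he
      rw [Finset.mem_coe, SimpleGraph.mem_edgeFinset] at he
      induction e using Sym2.ind with
      | _ u v =>
        simp only [SimpleGraph.mem_edgeSet, SimpleGraph.comap_adj] at he
        have hu := u.2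
        have hv := v.2
        simp only [Set.mem_compl_iff, Set.mem_insert_iff, Set.mem_singleton_iff, not_or] at hu hv
        simp only [Sym2.map_pair_eq, hS, Finset.mem_coe, Finset.mem_filter, SimpleGraph.mem_edgeFinset,
          SimpleGraph.mem_edgeSet, Sym2.mem_iff]
        refine ⟨he, ?_⟩
        rintro ((h|h)|(h|h)) <;> simp_all
    · intro e _ e' _ h
      exact Sym2.map.injective Subtype.val_injective h
  have h2 : 12 ≤ S.card := le_trans (hdel a b hab) h1
  have h3 : S.card + (G.edgeFinset.filter (fun e => a ∈ e ∨ b ∈ e)).card = 21 := by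
    rw [hS, add_comm]
    rw [Finset.card_filter_add_card_filter_not]
    exact hE
  have h4 : G.edgeFinset.filter (fun e => a ∈ e ∨ b ∈ e)
      = G.incidenceFinset a ∪ G.incidenceFinset b := by
    rw [SimpleGraph.incidenceFinset_eq_filter, SimpleGraph.incidenceFinset_eq_filter,
      ← Finset.filter_or]
  have h5 : (G.incidenceFinset a ∪ G.incidenceFinset b).card
      + (G.incidenceFinset a ∩ G.incidenceFinset b).card
      = G.degree a + G.degree b := by
    rw [Finset.card_union_add_card_inter, SimpleGraph.card_incidenceFinset_eq_degree,
      SimpleGraph.card_incidenceFinset_eq_degree]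
  rw [h4] at h3
  have h6 : (G.incidenceFinset a ∩ G.incidenceFinset b).card = if G.Adj a b then 1 else 0 := by
    have : G.incidenceFinset a ∩ G.incidenceFinset b
        = (G.incidenceSet a ∩ G.incidenceSet b).toFinset := by
      simp [SimpleGraph.incidenceFinset, Set.toFinset_inter]
    rw [this]
    split_ifs with h
    · have h7 := SimpleGraph.incidenceSet_inter_incidenceSet_of_adj G h
      simp [Set.toFinset_card, h7]
    · have h7 := SimpleGraph.incidenceSet_inter_incidenceSet_of_not_adj G h hab
      simp [Set.toFinset_card, h7]
  omega

theorem stmt_15 {V : Type*} [Fintype V] (G : SimpleGraph V)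
    (hV : Fintype.card V = 10) (hE : G.edgeFinset.card = 21)
    (hmin : ∀ v : V, 3 ≤ G.degree v)
    (hdel : ∀ a b : V, a ≠ b →
      12 ≤ (G.induce ({a, b}ᶜ : Set V)).edgeFinset.card) :
    (Finset.univ : Finset V).val.map (fun v => G.degree v) =
        (↑[3, 3, 3, 3, 5, 5, 5, 5, 5, 5] : Multiset ℕ) ∨
    (Finset.univ : Finset V).val.map (fun v => G.degree v) =
        (↑[3, 3, 3, 4, 4, 5, 5, 5, 5, 5] : Multiset ℕ) ∨
    (Finset.univ : Finset V).val.map (fun v => G.degree v) =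
        (↑[3, 3, 4, 4, 4, 4, 5, 5, 5, 5] : Multiset ℕ) ∨
    (Finset.univ : Finset V).val.map (fun v => G.degree v) =
        (↑[3, 4, 4, 4, 4, 4, 4, 5, 5, 5] : Multiset ℕ) ∨
    (Finset.univ : Finset V).val.map (fun v => G.degree v) =
        (↑[4, 4, 4, 4, 4, 4, 4, 4, 5, 5] : Multiset ℕ) := by
  classical
  have hsum : ∑ v : V, G.degree v = 42 := by
    rw [SimpleGraph.sum_degrees_eq_twice_card_edges, hE]
  -- every degree is at most 5
  have hmax : ∀ v : V, G.degree v ≤ 5 := by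
    intro a
    by_contra hlt
    push_neg at hlt
    set d := G.degree a with hd
    have hd9 : d ≤ 9 := by
      have := G.degree_lt_card_verts a
      omega
    have hNsub : G.neighborFinset a ⊆ Finset.univ.erase a := by
      intro b hb
      rw [SimpleGraph.mem_neighborFinset] at hb
      exact Finset.mem_erase.2 ⟨hb.ne', Finset.mem_univ b⟩
    have hsplit : ∑ b ∈ Finset.univ.erase a \ G.neighborFinset a, G.degree b
        + ∑ b ∈ G.neighborFinset a, G.degree b = ∑ b ∈ Finset.univ.erase a, G.degree b :=
      Finset.sum_sdiff hNsub
    have htot : d + ∑ b ∈ Finset.univ.erase a, G.degree b = 42 := by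
      rw [← hsum, ← Finset.add_sum_erase _ _ (Finset.mem_univ a)]
    have hNcard : (G.neighborFinset a).card = d := G.card_neighborFinset_eq_degree a
    have hRcard : (Finset.univ.erase a \ G.neighborFinset a).card = 9 - d := by
      rw [Finset.card_sdiff_of_subset hNsub, Finset.card_erase_of_mem (Finset.mem_univ a),
        Finset.card_univ, hV, hNcard]
    have hNbound : ∑ b ∈ G.neighborFinset a, G.degree b ≤ d * (10 - d) := by
      calc ∑ b ∈ G.neighborFinset a, G.degree b
          ≤ ∑ _b ∈ G.neighborFinset a, (10 - d) := by
            apply Finset.sum_le_sum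
            intro b hb
            rw [SimpleGraph.mem_neighborFinset] at hb
            have := stmt15_pair G hE hdel a b hb.ne
            rw [if_pos hb] at this
            omega
        _ = d * (10 - d) := by rw [Finset.sum_const, hNcard, smul_eq_mul]
    have hRbound : ∑ b ∈ Finset.univ.erase a \ G.neighborFinset a, G.degree b
        ≤ (9 - d) * (9 - d) := by
      calc ∑ b ∈ Finset.univ.erase a \ G.neighborFinset a, G.degree b
          ≤ ∑ _b ∈ Finset.univ.erase a \ G.neighborFinset a, (9 - d) := by
            apply Finset.sum_le_sum
            intro b hb
            rw [Finset.mem_sdiff, Finset.mem_erase, SimpleGraph.mem_neighborFinset] at hb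
            have := stmt15_pair G hE hdel a b (Ne.symm hb.1.1)
            rw [if_neg hb.2] at this
            omega
        _ = (9 - d) * (9 - d) := by rw [Finset.sum_const, hRcard, smul_eq_mul]
    have : 42 ≤ d + d * (10 - d) + (9 - d) * (9 - d) := by omega
    interval_cases d <;> omega
  -- move to the multiset of degrees
  set M : Multiset ℕ := (Finset.univ : Finset V).val.map (fun v => G.degree v) with hM
  have hMcard : Multiset.card M = 10 := by
    rw [hM, Multiset.card_map, ← Finset.card_def, Finset.card_univ, hV]
  have hMsum : M.sum = 42 := hsum
  have hmem : ∀ x ∈ M, x = 3 ∨ x = 4 ∨ x = 5 := by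
    intro x hx
    rw [hM, Multiset.mem_map] at hx
    obtain ⟨v, _, rfl⟩ := hx
    have := hmin v
    have := hmax v
    omega
  set a3 := M.count 3 with ha3
  set a4 := M.count 4 with ha4
  set a5 := M.count 5 with ha5
  have hrep : M = Multiset.replicate a3 3 + Multiset.replicate a4 4 + Multiset.replicate a5 5 := by
    ext n
    simp only [Multiset.count_add, Multiset.count_replicate]
    by_cases h3 : n = 3
    · subst h3; simp [ha3]
    by_cases h4 : n = 4
    · subst h4; simp [ha4]
    by_cases h5 : n = 5
    · subst h5; simp [ha5]
    rw [if_neg (fun h => h3 h.symm), if_neg (fun h => h4 h.symm), if_neg (fun h => h5 h.symm),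
      Multiset.count_eq_zero_of_notMem
        (fun h => by rcases hmem n h with h|h|h <;> exact absurd h (by assumption))]
  have hcard' : a3 + a4 + a5 = 10 := by
    have h := hMcard
    rw [hrep] at h
    simpa using h
  have hsum' : 3 * a3 + 4 * a4 + 5 * a5 = 42 := by
    have h := hMsum
    rw [hrep] at h
    simp only [Multiset.sum_add, Multiset.sum_replicate, smul_eq_mul] at h
    omega
  have h5b : 2 ≤ a5 := by omega
  have h5c : a5 ≤ 6 := by omega
  rw [hrep]
  interval_cases a5
  · have e4 : a4 = 8 := by omega
    have e3 : a3 = 0 := by omega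
    rw [e3, e4]
    right; right; right; right; decide
  · have e4 : a4 = 6 := by omega
    have e3 : a3 = 1 := by omega
    rw [e3, e4]
    right; right; right; left; decide
  · have e4 : a4 = 4 := by omega
    have e3 : a3 = 2 := by omega
    rw [e3, e4]
    right; right; left; decide
  · have e4 : a4 = 2 := by omega
    have e3 : a3 = 3 := by omega
    rw [e3, e4]
    right; left; decide
  · have e4 : a4 = 0 := by omega
    have e3 : a3 = 4 := by omega
    rw [e3, e4]
    left; decide
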